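/- If a graph G on n vertices has the property that the minimum size of a maximal matching equals n/2 (so n is even and every maximal matching is perfect), and G is connected but not isomorphic to K_n or K_{n/2,n/2}, then we obtain a contradiction; equivalently, any connected graph G on n vertices not isomorphic to K_n or K_{n/2,n/2} has a maximal matching of size strictly less than n/2. -/

import Mathlib

open SimpleGraph

/-- A matching of a simple graph, given as a set of edges: each edge belongs to the
graph, and distinct edges of the matching share no vertex. -/
def EdgeMatching {V : Type*} (G : SimpleGraph V) (M : Set (Sym2 V)) : Prop :=
  M ⊆ G.edgeSet ∧ ∀ e ∈ M, ∀ f ∈ M, e ≠ f → ∀ v : V, v ∈ e → v ∉ f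

/-- The set of vertices covered by a set of edges. -/
def mCover {V : Type*} (M : Set (Sym2 V)) : Set V := {v | ∃ e ∈ M, v ∈ e}

/-- A maximal matching: a matching to which no edge of the graph can be added. -/
def MaximalEdgeMatching {V : Type*} (G : SimpleGraph V) (M : Set (Sym2 V)) : Prop :=
  EdgeMatching G M ∧ ∀ e ∈ G.edgeSet, EdgeMatching G (insert e M) → e ∈ M

section Basic
variable {V : Type*} {G : SimpleGraph V} {M M' A B : Set (Sym2 V)}

lemma EdgeMatching.mono (h : M' ⊆ M) (hM : EdgeMatching G M) : EdgeMatching G M' :=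
  ⟨hM.1.trans' h, fun e he f hf hne v hv => hM.2 e (h he) f (h hf) hne v hv⟩

lemma EdgeMatching.unique (hM : EdgeMatching G M) {e f : Sym2 V} (he : e ∈ M) (hf : f ∈ M)
    {v : V} (hv : v ∈ e) (hv' : v ∈ f) : e = f := by
  by_contra hne
  exact hM.2 e he f hf hne v hv hv'

lemma EdgeMatching.adj (hM : EdgeMatching G M) {a b : V} (h : s(a,b) ∈ M) : G.Adj a b :=
  (G.mem_edgeSet).1 (hM.1 h)

lemma mem_mCover {v : V} : v ∈ mCover M ↔ ∃ e ∈ M, v ∈ e := Iff.rfl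

lemma mCover_union : mCover (A ∪ B) = mCover A ∪ mCover B := by
  ext v; simp [mCover, or_and_right, exists_or]

lemma mCover_insert {e : Sym2 V} : mCover (insert e M) = {v | v ∈ e} ∪ mCover M := by
  ext v; simp [mCover]

lemma mCover_singleton {e : Sym2 V} : mCover {e} = {v | v ∈ e} := by
  ext v; simp [mCover]

lemma mCover_mono (h : A ⊆ B) : mCover A ⊆ mCover B := by
  rintro v ⟨e, he, hv⟩; exact ⟨e, h he, hv⟩

lemma setOf_mem_sym2 {a b : V} (hab : a ≠ b) : {v | v ∈ s(a,b)} = ({a, b} : Set V) := by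
  ext v; simp [Sym2.mem_iff]

lemma mCover_ncard [Fintype V] (hM : EdgeMatching G M) : (mCover M).ncard = 2 * M.ncard := by
  classical
  refine Set.Finite.induction_on
    (motive := fun Mx _ => EdgeMatching G Mx → (mCover Mx).ncard = 2 * Mx.ncard) M
    (Set.toFinite M) (by simp [mCover]) ?_ hM
  rintro e Mx henotin hfin ih hM
  · have hMx : EdgeMatching G Mx := hM.mono (Set.subset_insert _ _)
    obtain ⟨a, b⟩ := e
    have hadj : G.Adj a b := hM.adj (Set.mem_insert _ _)
    have hcov : mCover (insert s(a,b) Mx) = ({a,b} : Set V) ∪ mCover Mx := by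
      rw [mCover_insert, setOf_mem_sym2 hadj.ne]
    have hdisj : Disjoint ({a,b} : Set V) (mCover Mx) := by
      rw [Set.disjoint_left]
      rintro v hv ⟨f, hf, hvf⟩
      have hne : s(a,b) ≠ f := by rintro rfl; exact henotin hf
      exact hM.2 _ (Set.mem_insert _ _) f (Set.mem_insert_of_mem _ hf) hne v
        (by rcases hv with rfl | rfl <;> simp) hvf
    rw [hcov, Set.ncard_union_eq hdisj, Set.ncard_pair hadj.ne, ih hMx,
      Set.ncard_insert_of_notMem henotin (Set.toFinite _)]
    ring

lemma matching_union (hA : EdgeMatching G A) (hB : EdgeMatching G B)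
    (hdisj : Disjoint (mCover A) (mCover B)) : EdgeMatching G (A ∪ B) := by
  constructor
  · exact Set.union_subset hA.1 hB.1
  · rintro e (he | he) f (hf | hf) hne v hv hvf
    · exact hA.2 e he f hf hne v hv hvf
    · exact Set.disjoint_left.1 hdisj ⟨e, he, hv⟩ ⟨f, hf, hvf⟩
    · exact Set.disjoint_left.1 hdisj ⟨f, hf, hvf⟩ ⟨e, he, hv⟩
    · exact hB.2 e he f hf hne v hv hvf

lemma maximal_of_cover (hM : EdgeMatching G M)
    (H : ∀ e ∈ G.edgeSet, e ∉ M → ∃ v, v ∈ e ∧ v ∈ mCover M) : MaximalEdgeMatching G M := by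
  refine ⟨hM, fun e he hins => ?_⟩
  by_contra henm
  obtain ⟨v, hve, f, hf, hvf⟩ := H e he henm
  have hne : e ≠ f := by rintro rfl; exact henm hf
  exact hins.2 e (Set.mem_insert _ _) f (Set.mem_insert_of_mem _ hf) hne v hve hvf

lemma exists_maximal [Fintype V] {M0 : Set (Sym2 V)} (hM0 : EdgeMatching G M0) :
    ∃ M, M0 ⊆ M ∧ MaximalEdgeMatching G M := by
  classical
  set S : Set (Set (Sym2 V)) := {M | EdgeMatching G M ∧ M0 ⊆ M} with hS
  have hfin : S.Finite := Set.toFinite S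
  have hne : S.Nonempty := ⟨M0, hM0, subset_rfl⟩
  obtain ⟨M, hMS, hmax⟩ := Set.Finite.exists_maximalFor Set.ncard S hfin hne
  refine ⟨M, hMS.2, hMS.1, fun e he hins => ?_⟩
  by_contra henm
  have hinsS : insert e M ∈ S := ⟨hins, hMS.2.trans (Set.subset_insert _ _)⟩
  have hle : M.ncard ≤ (insert e M).ncard := Set.ncard_le_ncard (Set.subset_insert _ _) (Set.toFinite _)
  have := hmax hinsS hle
  rw [Set.ncard_insert_of_notMem henm (Set.toFinite _)] at this
  omega

end Basic


section Main
variable {V : Type*} [Fintype V] {G : SimpleGraph V}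

lemma pair_disj {M : Set (Sym2 V)} (hM : EdgeMatching G M) {a a' b b' : V}
    (h1 : s(a,a') ∈ M) (h2 : s(b,b') ∈ M) (hne : s(a,a') ≠ s(b,b')) :
    a ≠ b ∧ a ≠ b' ∧ a' ≠ b ∧ a' ≠ b' := by
  refine ⟨fun h => ?_, fun h => ?_, fun h => ?_, fun h => ?_⟩ <;> subst h
  · exact hne (hM.unique (v := a) h1 h2 (by simp) (by simp))
  · exact hne (hM.unique (v := a) h1 h2 (by simp) (by simp))
  · exact hne (hM.unique (v := a') h1 h2 (by simp) (by simp))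
  · exact hne (hM.unique (v := a') h1 h2 (by simp) (by simp))

lemma cover_diff {M S : Set (Sym2 V)} (hM : EdgeMatching G M) (hcov : mCover M = Set.univ)
    (hS : S ⊆ M) : mCover (M \ S) = (mCover S)ᶜ := by
  ext v
  constructor
  · rintro ⟨f, ⟨hfM, hfS⟩, hv⟩ ⟨g, hgS, hvg⟩
    exact hfS (hM.unique hfM (hS hgS) hv hvg ▸ hgS)
  · intro hv
    have : v ∈ mCover M := hcov ▸ Set.mem_univ v
    obtain ⟨f, hfM, hvf⟩ := this
    exact ⟨f, ⟨hfM, fun hfS => hv ⟨f, hfS, hvf⟩⟩, hvf⟩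

variable (hbig : ∀ M, MaximalEdgeMatching G M → Fintype.card V ≤ 2 * M.ncard)
variable (hconn : G.Connected)

include hbig in
lemma perfect_ext {M0 : Set (Sym2 V)} (hM0 : EdgeMatching G M0) :
    ∃ M, M0 ⊆ M ∧ EdgeMatching G M ∧ mCover M = Set.univ := by
  obtain ⟨M, hsub, hmax⟩ := exists_maximal hM0
  refine ⟨M, hsub, hmax.1, ?_⟩
  have h1 : Fintype.card V ≤ (mCover M).ncard := by
    rw [mCover_ncard hmax.1]; exact hbig M hmax
  have h2 : (Set.univ : Set V).ncard = Fintype.card V := by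
    rw [Set.ncard_univ, Nat.card_eq_fintype_card]
  exact (Set.eq_of_subset_of_ncard_le (Set.subset_univ _) (h2 ▸ h1) (Set.toFinite _)).symm ▸ rfl

include hbig in
lemma tool1 {x y : V} (hxy : x ≠ y) (hna : ¬ G.Adj x y) {N : Set (Sym2 V)}
    (hN : EdgeMatching G N) (hcov : mCover N = Set.univ \ {x, y}) : False := by
  have hmax : MaximalEdgeMatching G N := by
    refine maximal_of_cover hN ?_
    rintro e he _
    obtain ⟨p, q⟩ := e
    have hadj : G.Adj p q := (G.mem_edgeSet).1 he
    by_cases hp : p = x ∨ p = y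
    · have hq : ¬(q = x ∨ q = y) := by
        rintro (rfl | rfl) <;> rcases hp with rfl | rfl
        · exact hadj.ne rfl
        · exact hna hadj.symm
        · exact hna hadj
        · exact hadj.ne rfl
      refine ⟨q, by simp, ?_⟩
      rw [hcov]
      simp only [Set.mem_diff, Set.mem_univ, true_and, Set.mem_insert_iff, Set.mem_singleton_iff]
      tauto
    · refine ⟨p, by simp, ?_⟩
      rw [hcov]
      simp only [Set.mem_diff, Set.mem_univ, true_and, Set.mem_insert_iff, Set.mem_singleton_iff]
      tauto
  have h1 := hbig N hmax
  rw [← mCover_ncard hN, hcov] at h1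
  have h2 : (Set.univ \ {x, y} : Set V).ncard = Fintype.card V - 2 := by
    rw [Set.ncard_diff (Set.subset_univ _) (Set.toFinite _), Set.ncard_pair hxy,
      Set.ncard_univ, Nat.card_eq_fintype_card]
  have h3 : 2 ≤ Fintype.card V := by
    have : 1 < Fintype.card V := Fintype.one_lt_card_iff_nontrivial.2 ⟨x, y, hxy⟩
    omega
  omega

include hbig in
lemma lemC {M : Set (Sym2 V)} (hM : EdgeMatching G M) (hcov : mCover M = Set.univ)
    {a a' b b' : V} (h1 : s(a,a') ∈ M) (h2 : s(b,b') ∈ M) (hne : s(a,a') ≠ s(b,b'))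
    (hab : G.Adj a b) : G.Adj a' b' := by
  by_contra hnadj
  obtain ⟨hab1, hab', ha'b, ha'b'⟩ := pair_disj hM h1 h2 hne
  have haa' := hM.adj h1
  have hbb' := hM.adj h2
  set S : Set (Sym2 V) := {s(a,a'), s(b,b')} with hS
  have hSsub : S ⊆ M := by
    rw [hS, Set.insert_subset_iff, Set.singleton_subset_iff]; exact ⟨h1, h2⟩
  have hcovS : mCover S = {a, a', b, b'} := by
    ext v
    simp only [hS, mCover, Set.mem_insert_iff, Set.mem_singleton_iff, Set.mem_setOf_eq,
      exists_eq_or_imp, exists_eq_left, Sym2.mem_iff]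
    tauto
  have hcovdiff : mCover (M \ S) = ({a, a', b, b'} : Set V)ᶜ := by
    rw [cover_diff hM hcov hSsub, hcovS]
  have hA : EdgeMatching G {s(a,b)} := by
    constructor
    · simp [Set.singleton_subset_iff, hab]
    · rintro e he f hf hnef
      simp only [Set.mem_singleton_iff] at he hf
      exact absurd (he.trans hf.symm) hnef
  have hdisj : Disjoint (mCover {s(a,b)}) (mCover (M \ S)) := by
    rw [mCover_singleton, setOf_mem_sym2 hab.ne, hcovdiff, Set.disjoint_left]
    rintro v (rfl | rfl) hvc <;> exact hvc (by simp)
  have hN : EdgeMatching G ({s(a,b)} ∪ (M \ S)) :=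
    matching_union hA (hM.mono Set.diff_subset) hdisj
  have hcovN : mCover ({s(a,b)} ∪ (M \ S)) = Set.univ \ {a', b'} := by
    rw [mCover_union, mCover_singleton, setOf_mem_sym2 hab.ne, hcovdiff]
    ext v
    simp only [Set.mem_union, Set.mem_insert_iff, Set.mem_singleton_iff, Set.mem_compl_iff,
      Set.mem_diff, Set.mem_univ, true_and]
    constructor
    · rintro ((rfl | rfl) | hv)
      · rintro (h | h)
        exacts [haa'.ne h, hab' h]
      · rintro (h | h)
        exacts [ha'b h.symm, hbb'.ne h]
      · rintro (h | h)
        exacts [hv (Or.inr (Or.inl h)), hv (Or.inr (Or.inr (Or.inr h)))]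
    · intro hv
      by_cases h1v : (v = a ∨ v = a' ∨ v = b ∨ v = b')
      · left
        rcases h1v with rfl | rfl | rfl | rfl
        · exact Or.inl rfl
        · exact absurd (Or.inl rfl) hv
        · exact Or.inr rfl
        · exact absurd (Or.inr rfl) hv
      · right; exact h1v
  exact tool1 hbig ha'b' hnadj hN hcovN

set_option maxHeartbeats 1000000 in
include hbig in
lemma lemCL {M : Set (Sym2 V)} (hM : EdgeMatching G M) (hcov : mCover M = Set.univ)
    {a a' c c' b b' : V} (h1 : s(a,a') ∈ M) (h2 : s(c,c') ∈ M) (h3 : s(b,b') ∈ M)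
    (h12 : s(a,a') ≠ s(c,c')) (h13 : s(a,a') ≠ s(b,b')) (h23 : s(c,c') ≠ s(b,b'))
    (hac : G.Adj a c) (hc'b : G.Adj c' b) : G.Adj a' b' := by
  by_contra hnadj
  obtain ⟨hac1, hac', ha'c, ha'c'⟩ := pair_disj hM h1 h2 h12
  obtain ⟨hab1, hab', ha'b, ha'b'⟩ := pair_disj hM h1 h3 h13
  obtain ⟨hcb, hcb', hc'b1, hc'b'⟩ := pair_disj hM h2 h3 h23
  have haa' := hM.adj h1
  have hcc' := hM.adj h2
  have hbb' := hM.adj h3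
  have hne_aa' : a ≠ a' := haa'.ne
  have hne_cc' : c ≠ c' := hcc'.ne
  have hne_bb' : b ≠ b' := hbb'.ne
  set S : Set (Sym2 V) := {s(a,a'), s(c,c'), s(b,b')} with hS
  have hSsub : S ⊆ M := by
    rw [hS, Set.insert_subset_iff, Set.insert_subset_iff, Set.singleton_subset_iff]
    exact ⟨h1, h2, h3⟩
  have hcovS : mCover S = {a, a', c, c', b, b'} := by
    ext v
    simp only [hS, mCover, Set.mem_insert_iff, Set.mem_singleton_iff, Set.mem_setOf_eq,
      exists_eq_or_imp, exists_eq_left, Sym2.mem_iff]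
    tauto
  have hcovdiff : mCover (M \ S) = ({a, a', c, c', b, b'} : Set V)ᶜ := by
    rw [cover_diff hM hcov hSsub, hcovS]
  have hA : EdgeMatching G {s(a,c), s(c',b)} := by
    constructor
    · rw [Set.insert_subset_iff, Set.singleton_subset_iff]
      exact ⟨hac, hc'b⟩
    · rintro e he f hf hnef v hv hvf
      simp only [Set.mem_insert_iff, Set.mem_singleton_iff] at he hf
      rcases he with rfl | rfl <;> rcases hf with rfl | rfl
      · exact hnef rfl
      · rcases Sym2.mem_iff.1 hv with rfl | rfl <;>
          simp only [Sym2.mem_iff] at hvf <;> tauto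
      · rcases Sym2.mem_iff.1 hv with rfl | rfl <;>
          simp only [Sym2.mem_iff] at hvf <;> tauto
      · exact hnef rfl
  have hcovA : mCover {s(a,c), s(c',b)} = ({a, c, c', b} : Set V) := by
    ext v
    simp only [mCover, Set.mem_insert_iff, Set.mem_singleton_iff, Set.mem_setOf_eq,
      exists_eq_or_imp, exists_eq_left, Sym2.mem_iff]
    tauto
  have hdisj : Disjoint (mCover {s(a,c), s(c',b)}) (mCover (M \ S)) := by
    rw [hcovA, hcovdiff, Set.disjoint_left]
    rintro v (rfl | rfl | rfl | rfl) hvc <;> exact hvc (by tauto)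
  have hN : EdgeMatching G ({s(a,c), s(c',b)} ∪ (M \ S)) :=
    matching_union hA (hM.mono Set.diff_subset) hdisj
  have hcovN : mCover ({s(a,c), s(c',b)} ∪ (M \ S)) = Set.univ \ {a', b'} := by
    rw [mCover_union, hcovA, hcovdiff]
    ext v
    simp only [Set.mem_union, Set.mem_insert_iff, Set.mem_singleton_iff, Set.mem_compl_iff,
      Set.mem_diff, Set.mem_univ, true_and]
    constructor
    · rintro ((rfl | rfl | rfl | rfl) | hv)
      · rintro (h | h)
        exacts [haa'.ne h, hab' h]
      · rintro (h | h)
        exacts [ha'c h.symm, hcb' h]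
      · rintro (h | h)
        exacts [ha'c' h.symm, hc'b' h]
      · rintro (h | h)
        exacts [ha'b h.symm, hbb'.ne h]
      · rintro (h | h)
        exacts [hv (Or.inr (Or.inl h)), hv (Or.inr (Or.inr (Or.inr (Or.inr (Or.inr h)))))]
    · intro hv
      by_cases h1v : (v = a ∨ v = a' ∨ v = c ∨ v = c' ∨ v = b ∨ v = b')
      · left
        rcases h1v with rfl | rfl | rfl | rfl | rfl | rfl
        · exact Or.inl rfl
        · exact absurd (Or.inl rfl) hv
        · exact Or.inr (Or.inl rfl)
        · exact Or.inr (Or.inr (Or.inl rfl))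
        · exact Or.inr (Or.inr (Or.inr rfl))
        · exact absurd (Or.inr rfl) hv
      · right; exact h1v
  exact tool1 hbig ha'b' hnadj hN hcovN

set_option maxHeartbeats 1000000 in
include hbig in
lemma adj_into {M : Set (Sym2 V)} (hM : EdgeMatching G M) (hcov : mCover M = Set.univ)
    {c c' b b' : V} (h2 : s(c,c') ∈ M) (h3 : s(b,b') ∈ M) (hne : s(c,c') ≠ s(b,b'))
    (hpq : ∃ p q, p ∈ s(c,c') ∧ q ∈ s(b,b') ∧ G.Adj p q) :
    ∃ q, q ∈ s(b,b') ∧ G.Adj c q := by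
  obtain ⟨p, q, hp, hq, hadj⟩ := hpq
  rcases Sym2.mem_iff.1 hp with rfl | rfl
  · exact ⟨q, hq, hadj⟩
  · have h2' : s(p,c) ∈ M := by rw [show s(p,c) = s(c,p) from Sym2.eq_swap]; exact h2
    rcases Sym2.mem_iff.1 hq with rfl | rfl
    · -- Adj p q with q = b : Adj c b' follows
      refine ⟨b', by simp, ?_⟩
      exact lemC hbig hM hcov h2' h3
        (by rw [show s(p,c) = s(c,p) from Sym2.eq_swap]; exact hne) hadj
    · refine ⟨b, by simp, ?_⟩
      have h3' : s(q,b) ∈ M := by rw [show s(q,b) = s(b,q) from Sym2.eq_swap]; exact h3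
      exact lemC hbig hM hcov h2' h3'
        (by rw [show s(p,c) = s(c,p) from Sym2.eq_swap, show s(q,b) = s(b,q) from Sym2.eq_swap];
            exact hne) hadj


set_option maxHeartbeats 1000000 in
include hbig in
lemma chain {M : Set (Sym2 V)} (hM : EdgeMatching G M) (hcov : mCover M = Set.univ)
    {a a' c c' b b' : V} (h1 : s(a,a') ∈ M) (h2 : s(c,c') ∈ M) (h3 : s(b,b') ∈ M)
    (h12 : s(a,a') ≠ s(c,c')) (h13 : s(a,a') ≠ s(b,b')) (h23 : s(c,c') ≠ s(b,b'))
    (hEG : ∃ p q, p ∈ s(a,a') ∧ q ∈ s(c,c') ∧ G.Adj p q)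
    (hGF : ∃ p q, p ∈ s(c,c') ∧ q ∈ s(b,b') ∧ G.Adj p q) :
    ∃ p q, p ∈ s(a,a') ∧ q ∈ s(b,b') ∧ G.Adj p q := by
  have hswap : ∀ x y : V, s(x,y) = s(y,x) := fun x y => Sym2.eq_swap
  obtain ⟨w, hw, haw⟩ := adj_into hbig hM hcov h1 h2 h12 hEG
  rcases Sym2.mem_iff.1 hw with rfl | rfl
  · -- Adj a w, w = c
    have h2' : s(w,c') ∈ M := h2
    have hGF' : ∃ p q, p ∈ s(c',w) ∧ q ∈ s(b,b') ∧ G.Adj p q := by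
      rw [hswap c' w]; exact hGF
    obtain ⟨q2, hq2, hc'q2⟩ := adj_into hbig hM hcov
      (by rw [hswap c' w]; exact h2) h3 (by rw [hswap c' w]; exact h23) hGF'
    rcases Sym2.mem_iff.1 hq2 with rfl | rfl
    · exact ⟨a', b', by simp, by simp, lemCL hbig hM hcov h1 h2 h3 h12 h13 h23 haw hc'q2⟩
    · have h3' : s(q2,b) ∈ M := by rw [hswap q2 b]; exact h3
      have := lemCL hbig hM hcov h1 h2 h3' h12
        (by rw [hswap q2 b]; exact h13) (by rw [hswap q2 b]; exact h23) haw hc'q2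
      exact ⟨a', b, by simp, by simp, this⟩
  · -- Adj a w, w = c'
    have h2' : s(w,c) ∈ M := by rw [hswap w c]; exact h2
    have h12' : s(a,a') ≠ s(w,c) := by rw [hswap w c]; exact h12
    have h23' : s(w,c) ≠ s(b,b') := by rw [hswap w c]; exact h23
    obtain ⟨q2, hq2, hcq2⟩ := adj_into hbig hM hcov h2 h3 h23 hGF
    rcases Sym2.mem_iff.1 hq2 with rfl | rfl
    · exact ⟨a', b', by simp, by simp, lemCL hbig hM hcov h1 h2' h3 h12' h13 h23' haw hcq2⟩
    · have h3' : s(q2,b) ∈ M := by rw [hswap q2 b]; exact h3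
      have := lemCL hbig hM hcov h1 h2' h3' h12'
        (by rw [hswap q2 b]; exact h13) (by rw [hswap q2 b]; exact h23') haw hcq2
      exact ⟨a', b, by simp, by simp, this⟩

include hbig hconn in
lemma pairs_adjacent {M : Set (Sym2 V)} (hM : EdgeMatching G M) (hcov : mCover M = Set.univ)
    {e f : Sym2 V} (he : e ∈ M) (hf : f ∈ M) (hnef : e ≠ f) :
    ∃ p q, p ∈ e ∧ q ∈ f ∧ G.Adj p q := by
  have key : ∀ k : ℕ, ∀ e f : Sym2 V, e ∈ M → f ∈ M → e ≠ f →
      ∀ u v : V, u ∈ e → v ∈ f → G.dist u v ≤ k → ∃ p q, p ∈ e ∧ q ∈ f ∧ G.Adj p q := by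
    intro k
    induction k with
    | zero =>
      intro e f he hf hnef u v hu hv hd
      have huv : u = v := (hconn.dist_eq_zero_iff).1 (Nat.le_zero.1 hd)
      exact absurd (hM.unique he hf hu (huv ▸ hv)) hnef
    | succ k ih =>
      intro e f he hf hnef u v hu hv hd
      by_cases huv : u = v
      · exact absurd (hM.unique he hf hu (huv ▸ hv)) hnef
      obtain ⟨p, hp⟩ := hconn.exists_walk_length_eq_dist u v
      cases p with
      | nil => exact absurd rfl huv
      | @cons _ w _ hadj q =>
        have hwcov : w ∈ mCover M := hcov ▸ Set.mem_univ w
        obtain ⟨g, hg, hwg⟩ := hwcov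
        have hdwv : G.dist w v ≤ k := by
          have h1 := dist_le q
          simp only [Walk.length_cons] at hp
          omega
        by_cases hgf : g = f
        · exact ⟨u, w, hu, hgf ▸ hwg, hadj⟩
        by_cases hge : g = e
        · exact ih e f he hf hnef w v (hge ▸ hwg) hv hdwv
        · obtain ⟨a, a'⟩ := e
          obtain ⟨c, c'⟩ := g
          obtain ⟨b, b'⟩ := f
          exact chain hbig hM hcov he hg hf (Ne.symm hge) hnef hgf
            ⟨u, w, hu, hwg, hadj⟩ (ih _ _ hg hf hgf w v hwg hv hdwv)
  obtain ⟨u, u'⟩ := e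
  obtain ⟨v, v'⟩ := f
  exact key (G.dist u v) _ _ he hf hnef u v (by simp) (by simp) le_rfl


include hbig hconn in
lemma nonadj_same_nbhd {x y : V} (hxy : x ≠ y) (hnxy : ¬ G.Adj x y)
    {t : V} (hxt : G.Adj x t) : G.Adj y t := by
  have hty : t ≠ y := fun h => hnxy (h ▸ hxt)
  have hM0 : EdgeMatching G {s(t,x)} := by
    constructor
    · simp [Set.singleton_subset_iff, hxt.symm]
    · rintro e he f hf hnef
      simp only [Set.mem_singleton_iff] at he hf
      exact absurd (he.trans hf.symm) hnef
  obtain ⟨M1, hsub, hM1, hcov⟩ := perfect_ext hbig hM0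
  have hst : s(t,x) ∈ M1 := hsub rfl
  have hycov : y ∈ mCover M1 := hcov ▸ Set.mem_univ y
  obtain ⟨ey, hey, hyey⟩ := hycov
  obtain ⟨y1, s0⟩ := ey
  have hyedge : ∃ z, s(y, z) ∈ M1 := by
    rcases Sym2.mem_iff.1 hyey with rfl | rfl
    · exact ⟨s0, hey⟩
    · exact ⟨y1, by rw [Sym2.eq_swap]; exact hey⟩
  obtain ⟨z, hyz⟩ := hyedge
  have hne : s(t,x) ≠ s(y,z) := by
    intro h
    have hy : y ∈ s(t,x) := h ▸ (by simp : y ∈ s(y,z))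
    rcases Sym2.mem_iff.1 hy with rfl | rfl
    · exact hty rfl
    · exact hxy rfl
  obtain ⟨p, q, hp, hq, hpq⟩ := pairs_adjacent hbig hconn hM1 hcov hst hyz hne
  rcases Sym2.mem_iff.1 hp with rfl | rfl <;> rcases Sym2.mem_iff.1 hq with rfl | rfl
  · exact hpq.symm
  · exact absurd (lemC hbig hM1 hcov hst
      (by rw [show s(q,y) = s(y,q) from Sym2.eq_swap]; exact hyz)
      (by rw [show s(q,y) = s(y,q) from Sym2.eq_swap]; exact hne) hpq) hnxy
  · exact absurd hpq hnxy
  · have hst' : s(p,t) ∈ M1 := by rw [show s(p,t) = s(t,p) from Sym2.eq_swap]; exact hst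
    have hyz' : s(q,y) ∈ M1 := by rw [show s(q,y) = s(y,q) from Sym2.eq_swap]; exact hyz
    have hne' : s(p,t) ≠ s(q,y) := by
      rw [show s(p,t) = s(t,p) from Sym2.eq_swap, show s(q,y) = s(y,q) from Sym2.eq_swap]
      exact hne
    exact (lemC hbig hM1 hcov hst' hyz' hne' hpq).symm

end Main


set_option maxHeartbeats 1000000 in
theorem exists_small_maximal_matching {V : Type*} [Fintype V]
    (G : SimpleGraph V) (n : ℕ) (hcard : Fintype.card V = n) (hconn : G.Connected)
    (hK : ¬ Nonempty (G ≃g (⊤ : SimpleGraph (Fin n))))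
    (hKB : ¬ Nonempty (G ≃g completeBipartiteGraph (Fin (n / 2)) (Fin (n / 2)))) :
    ∃ M : Set (Sym2 V), MaximalEdgeMatching G M ∧ 2 * M.ncard < n := by
  classical
  subst hcard
  by_contra hcon
  push_neg at hcon
  have hbig : ∀ M, MaximalEdgeMatching G M → Fintype.card V ≤ 2 * M.ncard := fun M hM =>
    hcon M hM
  by_cases hcomp : ∀ u v : V, u ≠ v → G.Adj u v
  · refine hK ⟨⟨Fintype.equivFin V, ?_⟩⟩
    intro u v
    simp only [top_adj]
    constructor
    · intro h
      exact hcomp u v fun he => h (congrArg _ he)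
    · intro h he
      exact h.ne ((Fintype.equivFin V).injective he)
  · push_neg at hcomp
    obtain ⟨a, u0, hau0, hnadj⟩ := hcomp
    set X : Set V := {v : V | ¬ G.Adj a v} with hX
    have haX : a ∈ X := by simp [hX]
    have hu0X : u0 ∈ X := hnadj
    have hXc : ∀ v, v ∉ X ↔ G.Adj a v := by intro v; simp [hX]
    have hXind : ∀ x y, x ∈ X → y ∈ X → x ≠ y → ¬ G.Adj x y := by
      intro x y hx hy hne hadj
      rcases eq_or_ne x a with rfl | hxa
      · exact hy hadj
      · rcases eq_or_ne y a with rfl | hya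
        · exact hx hadj.symm
        · exact hy (nonadj_same_nbhd hbig hconn hxa (fun h => hx h.symm) hadj)
    have hcross : ∀ x ∈ X, ∀ y, y ∉ X → G.Adj x y := by
      intro x hx y hy
      have hay : G.Adj a y := (hXc y).1 hy
      rcases eq_or_ne x a with rfl | hxa
      · exact hay
      · exact nonadj_same_nbhd hbig hconn (Ne.symm hxa) hx hay
    have hYind : ∀ y1 y2, y1 ∉ X → y2 ∉ X → y1 ≠ y2 → ¬ G.Adj y1 y2 := by
      intro y1 y2 hy1 hy2 hne hadj
      have hay1 : G.Adj a y1 := (hXc y1).1 hy1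
      have hay2 : G.Adj a y2 := (hXc y2).1 hy2
      have hu0y1 : G.Adj u0 y1 := hcross u0 hu0X y1 hy1
      have hu0y2 : G.Adj u0 y2 := hcross u0 hu0X y2 hy2
      have hM0 : EdgeMatching G {s(a,y1), s(u0,y2)} := by
        constructor
        · rw [Set.insert_subset_iff, Set.singleton_subset_iff]
          exact ⟨hay1, hu0y2⟩
        · rintro e he f hf hnef v hv hvf
          simp only [Set.mem_insert_iff, Set.mem_singleton_iff] at he hf
          have h1 : a ≠ u0 := hau0
          have h2 : a ≠ y2 := hay2.ne
          have h3 : y1 ≠ u0 := fun h => ((h ▸ hu0y1).ne rfl)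
          have h4 : y1 ≠ y2 := hne
          rcases he with rfl | rfl <;> rcases hf with rfl | rfl
          · exact hnef rfl
          · rcases Sym2.mem_iff.1 hv with rfl | rfl <;>
              simp only [Sym2.mem_iff] at hvf <;> tauto
          · rcases Sym2.mem_iff.1 hv with rfl | rfl <;>
              simp only [Sym2.mem_iff] at hvf <;> tauto
          · exact hnef rfl
      obtain ⟨M2, hsub, hM2, hcov⟩ := perfect_ext hbig hM0
      have h1' : s(y1,a) ∈ M2 := by
        rw [show s(y1,a) = s(a,y1) from Sym2.eq_swap]; exact hsub (Set.mem_insert _ _)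
      have h2' : s(y2,u0) ∈ M2 := by
        rw [show s(y2,u0) = s(u0,y2) from Sym2.eq_swap]
        exact hsub (Set.mem_insert_of_mem _ rfl)
      have hnee : s(y1,a) ≠ s(y2,u0) := by
        intro h
        have : a ∈ s(y2,u0) := h ▸ (by simp : a ∈ s(y1,a))
        rcases Sym2.mem_iff.1 this with rfl | rfl
        · exact hay2.ne rfl
        · exact hau0 rfl
      exact hnadj (lemC hbig hM2 hcov h1' h2' hnee hadj)
    have hadj_iff : ∀ u v : V, G.Adj u v ↔ ((u ∈ X ∧ v ∉ X) ∨ (u ∉ X ∧ v ∈ X)) := by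
      intro u v
      constructor
      · intro h
        by_cases hu : u ∈ X <;> by_cases hv : v ∈ X
        · exact absurd h (hXind u v hu hv h.ne)
        · exact Or.inl ⟨hu, hv⟩
        · exact Or.inr ⟨hu, hv⟩
        · exact absurd h (hYind u v hu hv h.ne)
      · rintro (⟨hu, hv⟩ | ⟨hu, hv⟩)
        · exact hcross u hu v hv
        · exact (hcross v hv u hu).symm
    have hMempty : EdgeMatching G (∅ : Set (Sym2 V)) :=
      ⟨Set.empty_subset _, fun e he => absurd he (Set.notMem_empty e)⟩
    obtain ⟨M, -, hM, hcov⟩ := perfect_ext hbig hMempty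
    have hpart : ∀ v : V, ∃ w, s(v,w) ∈ M := by
      intro v
      have : v ∈ mCover M := hcov ▸ Set.mem_univ v
      obtain ⟨e, he, hv⟩ := this
      obtain ⟨p, q⟩ := e
      rcases Sym2.mem_iff.1 hv with rfl | rfl
      · exact ⟨q, he⟩
      · exact ⟨p, by rw [Sym2.eq_swap]; exact he⟩
    choose p hp using hpart
    have hadjp : ∀ v, G.Adj v (p v) := fun v => hM.adj (hp v)
    have hpp : ∀ v, p (p v) = v := by
      intro v
      have h1 : s(p v, p (p v)) ∈ M := hp (p v)
      have h2 : s(p v, v) ∈ M := by rw [Sym2.eq_swap]; exact hp v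
      exact Sym2.congr_right.1 (hM.unique (v := p v) h1 h2 (by simp) (by simp))
    have hmaps : ∀ v, v ∈ X → p v ∈ Xᶜ := by
      intro v hv hpv
      exact hXind v (p v) hv hpv (hadjp v).ne (hadjp v)
    have hmaps' : ∀ v, v ∈ Xᶜ → p v ∈ X := by
      intro v hv
      by_contra hpv
      exact hYind v (p v) hv hpv (hadjp v).ne (hadjp v)
    have hbij : Set.BijOn p X Xᶜ := by
      refine ⟨hmaps, fun x _ y _ hxy => ?_, fun y hy => ⟨p y, hmaps' y hy, hpp y⟩⟩
      rw [← hpp x, hxy, hpp y]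
    have hXcard : X.ncard = Xᶜ.ncard := by
      rw [← hbij.image_eq, Set.ncard_image_of_injOn hbij.injOn]
    have hsum : X.ncard + Xᶜ.ncard = Fintype.card V := by
      rw [← Set.ncard_union_eq disjoint_compl_right (Set.toFinite _) (Set.toFinite _),
        Set.union_compl_self, Set.ncard_univ, Nat.card_eq_fintype_card]
    have hXhalf : X.ncard = Fintype.card V / 2 := by omega
    have hfX : Fintype.card ↥X = Fintype.card V / 2 := by
      rw [← Set.toFinset_card, ← Set.ncard_eq_toFinset_card']
      exact hXhalf
    have hfXc : Fintype.card ↥(Xᶜ) = Fintype.card V / 2 := by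
      rw [← Set.toFinset_card, ← Set.ncard_eq_toFinset_card', ← hXcard]
      exact hXhalf
    have e1 : ↥X ≃ Fin (Fintype.card V / 2) := Fintype.equivFinOfCardEq hfX
    have e2 : ↥(Xᶜ) ≃ Fin (Fintype.card V / 2) := Fintype.equivFinOfCardEq hfXc
    refine hKB ⟨⟨(Equiv.Set.sumCompl X).symm.trans (Equiv.sumCongr e1 e2), ?_⟩⟩
    intro u v
    have heq1 : ∀ (w : V) (hw : w ∈ X),
        ((Equiv.Set.sumCompl X).symm.trans (Equiv.sumCongr e1 e2)) w = Sum.inl (e1 ⟨w, hw⟩) := by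
      intro w hw
      rw [Equiv.trans_apply, Equiv.Set.sumCompl_symm_apply_of_mem hw]
      rfl
    have heq2 : ∀ (w : V) (hw : w ∉ X),
        ((Equiv.Set.sumCompl X).symm.trans (Equiv.sumCongr e1 e2)) w = Sum.inr (e2 ⟨w, hw⟩) := by
      intro w hw
      rw [Equiv.trans_apply, Equiv.Set.sumCompl_symm_apply_of_notMem hw]
      rfl
    have hcbg : ∀ (x y : Fin (Fintype.card V / 2) ⊕ Fin (Fintype.card V / 2)),
        (completeBipartiteGraph (Fin (Fintype.card V / 2)) (Fin (Fintype.card V / 2))).Adj x y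
          ↔ (x.isLeft ∧ y.isRight ∨ x.isRight ∧ y.isLeft) := by
      intro x y
      rfl
    by_cases hu : u ∈ X <;> by_cases hv : v ∈ X
    · simp only [heq1 u hu, heq1 v hv, hcbg, Sum.isLeft_inl, Sum.isRight_inl]
      rw [hadj_iff u v]
      simp [hu, hv]
    · simp only [heq1 u hu, heq2 v hv, hcbg, Sum.isLeft_inl, Sum.isRight_inl,
        Sum.isRight_inr, Sum.isLeft_inr]
      rw [hadj_iff u v]
      simp [hu, hv]
    · simp only [heq2 u hu, heq1 v hv, hcbg, Sum.isLeft_inl, Sum.isRight_inl,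
        Sum.isRight_inr, Sum.isLeft_inr]
      rw [hadj_iff u v]
      simp [hu, hv]
    · simp only [heq2 u hu, heq2 v hv, hcbg, Sum.isRight_inr, Sum.isLeft_inr]
      rw [hadj_iff u v]
      simp [hu, hv]
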